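/- The Dickson product polynomial f_n(X) = ∏_w (X + w), where w runs over all p^n 𝔽_p-linear combinations of the variables y_1,…,y_n, is a monic polynomial of degree p^n in X whose coefficient at X^j is zero whenever j is not of the form p^r with 0 ≤ r ≤ n; in particular f_n(X) = X^{p^n} + ∑_{r=0}^{n-1} D_{n,r} X^{p^r} for uniquely determined polynomials D_{n,r} ∈ S. -/

import Mathlib

open Polynomial

/-- The Dickson product polynomial `f_n(X) = ∏_w (X + w)`, where `w` runs over all
`p^n` linear combinations of the variables `y_1, …, y_n` with coefficients in `𝔽_p`. -/
noncomputable def dicksonF (p n : ℕ) [Fact p.Prime] : Polynomial (MvPolynomial (Fin n) (ZMod p)) :=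
  ∏ c : Fin n → ZMod p,
    (Polynomial.X + Polynomial.C (∑ i : Fin n, c i • MvPolynomial.X i))

namespace DicksonFProof

variable (p : ℕ) [hp : Fact p.Prime] (n : ℕ)

/-- Binomial coefficient `C(p^s * m, p^s)` is `m` mod `p`. -/
lemma choose_pow_mul (s m : ℕ) : (((p ^ s * m).choose (p ^ s) : ZMod p)) = (m : ZMod p) := by
  have hq : 0 < p ^ s := pow_pos hp.out.pos s
  have h1 : ((X + 1 : (ZMod p)[X]) ^ (p ^ s * m))
      = Polynomial.expand (ZMod p) (p ^ s) ((X + 1) ^ m) := by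
    rw [pow_mul, add_pow_char_pow, one_pow, map_pow, map_add, Polynomial.expand_X, map_one]
  have h2 := congrArg (fun f => Polynomial.coeff f (p ^ s)) h1
  simp only [coeff_X_add_one_pow, coeff_expand hq, dvd_refl, if_pos, Nat.div_self hq] at h2
  simpa [Nat.choose_one_right] using h2

lemma exists_choose_ne_zero (j : ℕ) (hj0 : j ≠ 0) (hj : ¬ ∃ r : ℕ, j = p ^ r) :
    ∃ k, 0 < k ∧ k < j ∧ ((j.choose k : ZMod p) ≠ 0) := by
  set s := j.factorization p with hs
  have hq : 0 < p ^ s := pow_pos hp.out.pos s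
  set m := j / p ^ s with hm
  have hjm : p ^ s * m = j := Nat.ordProj_mul_ordCompl_eq_self j p
  have hpm : ¬ p ∣ m := Nat.not_dvd_ordCompl hp.out hj0
  have hm0 : m ≠ 0 := (Nat.ordCompl_pos p hj0).ne'
  have hm1 : m ≠ 1 := by
    intro h; exact hj ⟨s, by rw [← hjm, h, mul_one]⟩
  have hm2 : 2 ≤ m := (Nat.two_le_iff m).mpr ⟨hm0, hm1⟩
  refine ⟨p ^ s, hq, ?_, ?_⟩
  · calc p ^ s = p ^ s * 1 := (mul_one _).symm
      _ < p ^ s * m := Nat.mul_lt_mul_of_pos_left (by omega) hq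
      _ = j := hjm
  · rw [← hjm, choose_pow_mul]
    intro h
    exact hpm ((ZMod.natCast_eq_zero_iff m p).mp h)

/-- The linear form `∑ cᵢ yᵢ`. -/
noncomputable def lf (c : Fin n → ZMod p) : MvPolynomial (Fin n) (ZMod p) :=
  ∑ i : Fin n, c i • MvPolynomial.X i

lemma dicksonF_eq : dicksonF p n = ∏ c : Fin n → ZMod p, (X + C (lf p n c)) := rfl

lemma lf_add (c c' : Fin n → ZMod p) : lf p n (c + c') = lf p n c + lf p n c' := by
  simp [lf, add_smul, Finset.sum_add_distrib]

lemma lf_neg (c : Fin n → ZMod p) : lf p n (-c) = - lf p n c := by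
  simp [lf, neg_smul]

lemma lf_zero : lf p n 0 = 0 := by simp [lf]

lemma lf_injective : Function.Injective (lf p n) := by
  intro c c' h
  funext i
  have h2 := congrArg (MvPolynomial.eval (Pi.single i (1 : ZMod p))) h
  simpa [lf, MvPolynomial.smul_eq_C_mul, Pi.single_apply, mul_ite,
    Finset.sum_ite_eq'] using h2

lemma dicksonF_monic : (dicksonF p n).Monic :=
  monic_prod_of_monic _ _ fun _ _ => monic_X_add_C _

lemma dicksonF_natDegree : (dicksonF p n).natDegree = p ^ n := by
  rw [dicksonF_eq, natDegree_prod_of_monic _ _ (fun _ _ => monic_X_add_C _)]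
  simp [natDegree_X_add_C, Finset.card_univ]

lemma dicksonF_comp (c : Fin n → ZMod p) :
    (dicksonF p n).comp (X + C (lf p n c)) = dicksonF p n := by
  rw [dicksonF_eq, prod_comp]
  calc (∏ c' : Fin n → ZMod p, (X + C (lf p n c')).comp (X + C (lf p n c)))
      = ∏ c' : Fin n → ZMod p, (X + C (lf p n (c' + c))) := by
        refine Finset.prod_congr rfl fun c' _ => ?_
        simp [add_comp, lf_add, add_comm, add_assoc, add_left_comm]
    _ = ∏ c'' : Fin n → ZMod p, (X + C (lf p n c'')) :=
        Fintype.prod_equiv (Equiv.addRight c) _ _ (fun c' => rfl)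

lemma dicksonF_eval_lf (c : Fin n → ZMod p) : (dicksonF p n).eval (lf p n c) = 0 := by
  rw [dicksonF_eq, eval_prod]
  apply Finset.prod_eq_zero (Finset.mem_univ (-c))
  simp [lf_neg]

lemma hasseDeriv_dicksonF (k : ℕ) (hk : 1 ≤ k) :
    hasseDeriv k (dicksonF p n) = C ((dicksonF p n).coeff k) := by
  set R := MvPolynomial (Fin n) (ZMod p)
  set F : R[X] := dicksonF p n with hF
  set Fm : (R[X])[X] := F.map (C : R →+* R[X]) with hFm
  have hFmon : F.Monic := dicksonF_monic p n
  have hFdeg : F.natDegree = p ^ n := dicksonF_natDegree p n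
  have hFmmon : Fm.Monic := hFmon.map _
  have hTmon : (taylor (X : R[X]) Fm).Monic := by
    rw [taylor_apply]; exact hFmmon.comp_X_add_C _
  have hTdeg : (taylor (X : R[X]) Fm).natDegree = p ^ n := by
    rw [natDegree_taylor, hFm, hFmon.natDegree_map, hFdeg]
  have hFmdeg : Fm.natDegree = p ^ n := by rw [hFm, hFmon.natDegree_map, hFdeg]
  have hpn : 0 < p ^ n := pow_pos hp.out.pos n
  -- the difference polynomial
  set Q : (R[X])[X] := taylor (X : R[X]) Fm - Fm - C F with hQ
  have hQ0 : Q = 0 := by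
    apply eq_zero_of_natDegree_lt_card_of_eval_eq_zero Q
      (f := fun c : Fin n → ZMod p => (C (lf p n c) : R[X]))
      (fun a b hab => lf_injective p n (C_injective hab))
    · intro c
      have e1 : Q.eval (C (lf p n c)) =
          Fm.eval (C (lf p n c) + X) - Fm.eval (C (lf p n c)) - F := by
        simp [hQ, taylor_eval]
      rw [e1]
      have e2 : Fm.eval (C (lf p n c) + X) = F.comp (X + C (lf p n c)) := by
        rw [hFm, eval_map, comp, add_comm]
      have e3 : Fm.eval (C (lf p n c)) = C (F.eval (lf p n c)) := by
        rw [hFm, eval_map, eval₂_at_apply]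
      rw [e2, e3, dicksonF_comp, dicksonF_eval_lf]
      simp [hF]
    · have hde : (taylor (X : R[X]) Fm).degree = Fm.degree := by
        rw [degree_eq_natDegree hTmon.ne_zero, degree_eq_natDegree hFmmon.ne_zero,
          hTdeg, hFmdeg]
      have h1 : (taylor (X : R[X]) Fm - Fm).degree < (p ^ n : ℕ) := by
        have := degree_sub_lt hde hTmon.ne_zero
            (by rw [hTmon.leadingCoeff, hFmmon.leadingCoeff])
        rwa [degree_eq_natDegree hTmon.ne_zero, hTdeg] at this
      have h1' : (taylor (X : R[X]) Fm - Fm).natDegree < p ^ n := by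
        rcases eq_or_ne (taylor (X : R[X]) Fm - Fm) 0 with h | h
        · simpa [h] using hpn
        · exact (natDegree_lt_iff_degree_lt h).mpr (by exact_mod_cast h1)
      have h2 : Q.natDegree < p ^ n := by
        refine lt_of_le_of_lt (natDegree_sub_le _ _) ?_
        simp only [natDegree_C, max_lt_iff]
        exact ⟨h1', hpn⟩
      calc Q.natDegree < p ^ n := h2
        _ = Fintype.card (Fin n → ZMod p) := by
            simp [Fintype.card_fun]
  have hmapd : hasseDeriv k Fm = (hasseDeriv k F).map (C : R →+* R[X]) := by
    ext i
    simp [hasseDeriv_coeff, coeff_map, hFm]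
  have h := congrArg (fun g => g.coeff k) hQ0
  simp only [hQ, coeff_sub, coeff_zero, taylor_coeff, hmapd, eval_map, eval₂_C_X,
    hFm, coeff_map, coeff_C, if_neg (by omega : k ≠ 0), sub_zero] at h
  rw [sub_eq_zero] at h
  rw [← hFm, hmapd, eval_map, eval₂_C_X] at h
  exact h

lemma coeff_mul_choose (i k : ℕ) (hi : 1 ≤ i) (hk : 1 ≤ k) :
    (((i + k).choose k : MvPolynomial (Fin n) (ZMod p))) * (dicksonF p n).coeff (i + k) = 0 := by
  have h := hasseDeriv_dicksonF p n k hk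
  have h2 := congrArg (fun g => g.coeff i) h
  simp only [hasseDeriv_coeff, coeff_C, if_neg (show ¬ i = 0 by omega)] at h2
  exact h2

lemma coeff_eq_zero_of_not_pow (j : ℕ) (hj0 : j ≠ 0) (hj : ¬ ∃ r : ℕ, j = p ^ r) :
    (dicksonF p n).coeff j = 0 := by
  obtain ⟨k, hk0, hkj, hne⟩ := exists_choose_ne_zero p j hj0 hj
  have h := coeff_mul_choose p n (j - k) k (by omega) hk0
  rw [(by omega : j - k + k = j)] at h
  rcases mul_eq_zero.mp h with h' | h'
  · exfalso
    apply hne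
    have hcast : ((j.choose k : ℕ) : MvPolynomial (Fin n) (ZMod p))
        = MvPolynomial.C ((j.choose k : ZMod p)) := by
      rw [← map_natCast (MvPolynomial.C : ZMod p →+* MvPolynomial (Fin n) (ZMod p))]
    rw [hcast] at h'
    exact MvPolynomial.C_eq_zero.mp h'
  · exact h'

lemma dicksonF_coeff_zero : (dicksonF p n).coeff 0 = 0 := by
  rw [coeff_zero_eq_eval_zero, dicksonF_eq, eval_prod]
  apply Finset.prod_eq_zero (Finset.mem_univ 0)
  simp [lf_zero]

end DicksonFProof

theorem dicksonF_monic_and_supported_on_p_powers (p n : ℕ) [Fact p.Prime] (hn : 1 ≤ n) :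
    (dicksonF p n).Monic ∧
    (dicksonF p n).natDegree = p ^ n ∧
    (∀ j : ℕ, (¬ ∃ r ≤ n, j = p ^ r) → (dicksonF p n).coeff j = 0) ∧
    (∃! D : Fin n → MvPolynomial (Fin n) (ZMod p),
      dicksonF p n =
        Polynomial.X ^ (p ^ n) +
          ∑ r : Fin n, Polynomial.C (D r) * Polynomial.X ^ (p ^ (r : ℕ))) := by
  have hp := (Fact.out : p.Prime)
  have hmon := DicksonFProof.dicksonF_monic p n
  have hdeg := DicksonFProof.dicksonF_natDegree p n
  have hpinj : Function.Injective (fun r : ℕ => p ^ r) :=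
    fun a b hab => Nat.pow_right_injective hp.two_le hab
  have hcoeff : ∀ j : ℕ, (¬ ∃ r ≤ n, j = p ^ r) → (dicksonF p n).coeff j = 0 := by
    intro j hj
    rcases eq_or_ne j 0 with rfl | hj0
    · exact DicksonFProof.dicksonF_coeff_zero p n
    by_cases hnp : ∃ r : ℕ, j = p ^ r
    · obtain ⟨r, rfl⟩ := hnp
      have hrn : ¬ r ≤ n := fun h => hj ⟨r, h, rfl⟩
      apply coeff_eq_zero_of_natDegree_lt
      rw [hdeg]
      exact Nat.pow_lt_pow_right hp.one_lt (by omega)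
    · exact DicksonFProof.coeff_eq_zero_of_not_pow p n j hj0 hnp
  refine ⟨hmon, hdeg, hcoeff, ?_⟩
  have hcoeff_pn : (dicksonF p n).coeff (p ^ n) = 1 := by
    rw [← hdeg]; exact hmon.coeff_natDegree
  -- key computation: coefficient of the RHS at an index j
  have hrhs : ∀ (D : Fin n → MvPolynomial (Fin n) (ZMod p)) (j : ℕ),
      (Polynomial.X ^ (p ^ n) +
        ∑ r : Fin n, Polynomial.C (D r) * Polynomial.X ^ (p ^ (r : ℕ))).coeff j
      = (if j = p ^ n then 1 else 0)
        + ∑ r : Fin n, (if j = p ^ (r : ℕ) then D r else 0) := by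
    intro D j
    rw [coeff_add, coeff_X_pow, finset_sum_coeff]
    congr 1
    refine Finset.sum_congr rfl fun r _ => ?_
    rw [coeff_C_mul, coeff_X_pow]
    split <;> simp
  refine ⟨fun r => (dicksonF p n).coeff (p ^ (r : ℕ)), ?_, ?_⟩
  · refine Polynomial.ext fun j => ?_
    rw [hrhs]
    by_cases hj : ∃ r ≤ n, j = p ^ r
    · obtain ⟨r, hr, rfl⟩ := hj
      rcases eq_or_lt_of_le hr with heq | hrn
      · rw [heq, if_pos rfl, hcoeff_pn]
        have hz : ∀ r' : Fin n,
            (if p ^ n = p ^ (r' : ℕ) then (dicksonF p n).coeff (p ^ (r' : ℕ)) else 0) = 0 := by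
          intro r'
          rw [if_neg]
          intro h
          have := hpinj h
          have := r'.isLt
          omega
        simp [hz]
      · rw [if_neg (fun h => by have := hpinj h; omega)]
        rw [Finset.sum_eq_single (⟨r, hrn⟩ : Fin n)]
        · simp
        · intro r' _ hne
          rw [if_neg]
          intro h
          apply hne
          exact Fin.ext (hpinj h.symm)
        · intro h
          exact absurd (Finset.mem_univ _) h
    · rw [hcoeff j hj]
      rw [if_neg (fun h => hj ⟨n, le_refl n, h⟩)]
      have hz : ∀ r' : Fin n,
          (if j = p ^ (r' : ℕ) then (dicksonF p n).coeff (p ^ (r' : ℕ)) else 0) = 0 := by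
        intro r'
        rw [if_neg]
        exact fun h => hj ⟨(r' : ℕ), le_of_lt r'.isLt, h⟩
      simp [hz]
  · intro D hD
    funext r
    have h := congrArg (fun g => g.coeff (p ^ (r : ℕ))) hD
    simp only [hrhs] at h
    rw [if_neg (fun hh => by have := hpinj hh; omega)] at h
    rw [Finset.sum_eq_single r] at h
    · simpa using h.symm
    · intro r' _ hne
      rw [if_neg]
      intro hh
      exact hne (Fin.ext (hpinj hh).symm)
    · intro hh
      exact absurd (Finset.mem_univ _) hh
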